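/- arXiv:1606.03315 — 2 statements merged into one kernel-verified Lean document; each statement's English description precedes it below -/
import Mathlib

section
/- Every rotation of three-dimensional space arises from quaternion conjugation: for every ℝ-linear map R on the space of purely imaginary quaternions (identified with ℝ³) that preserves the Euclidean norm and has determinant 1, there exists a unit quaternion q such that R(v) = q v q⁻¹ for every purely imaginary quaternion v. -/
open Quaternion

open Matrix

/-- The quaternion with real (scalar) part `α` and imaginary (vector) part
`u ∈ ℝ³` (the purely imaginary quaternions being identified with Euclidean `ℝ³`). -/
def quatOf (α : ℝ) (u : EuclideanSpace ℝ (Fin 3)) : ℍ[ℝ] := ⟨α, u 0, u 1, u 2⟩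


set_option maxHeartbeats 1000000 in
lemma quatA (a b c d e f g h i : ℝ)
    (hR1 : a^2+b^2+c^2 = 1) (hR2 : d^2+e^2+f^2 = 1) (hR3 : g^2+h^2+i^2 = 1)
    (hR4 : a*d+b*e+c*f = 0) (hR5 : a*g+b*h+c*i = 0) (hR6 : d*g+e*h+f*i = 0)
    (hC1 : a^2+d^2+g^2 = 1) (hC2 : b^2+e^2+h^2 = 1) (hC3 : c^2+f^2+i^2 = 1)
    (hC4 : a*b+d*e+g*h = 0) (hC5 : a*c+d*f+g*i = 0) (hC6 : b*c+e*f+h*i = 0)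
    (coa : e*i-f*h = a) (cob : f*g-d*i = b) (coc : d*h-e*g = c)
    (cod : c*h-b*i = d) (coe : a*i-c*g = e) (cof : b*g-a*h = f)
    (cog : b*f-c*e = g) (coh : c*d-a*f = h) (coi : a*e-b*d = i)
    (hs : 0 < 1+a+e+i) :
    ∃ w x y z : ℝ, w^2+x^2+y^2+z^2 = 1 ∧
      a = w^2+x^2-y^2-z^2 ∧ b = 2*(x*y-w*z) ∧ c = 2*(x*z+w*y) ∧
      d = 2*(x*y+w*z) ∧ e = w^2-x^2+y^2-z^2 ∧ f = 2*(y*z-w*x) ∧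
      g = 2*(x*z-w*y) ∧ h = 2*(y*z+w*x) ∧ i = w^2-x^2-y^2+z^2 := by
  have pa : (1+a+e+i)^2 + (h-f)^2 = 2*(1+a+e+i)*(1+a) := by
    linear_combination hC2 + hC3 - hR1 + 2*coa
  have pe : (1+a+e+i)^2 + (c-g)^2 = 2*(1+a+e+i)*(1+e) := by
    linear_combination hC3 + hC1 - hR2 + 2*coe
  have pi' : (1+a+e+i)^2 + (d-b)^2 = 2*(1+a+e+i)*(1+i) := by
    linear_combination hC1 + hC2 - hR3 + 2*coi
  have k01 : (1+a+e+i)*(b+d) = (h-f)*(c-g) := by linear_combination hC4 + hR4 - cob - cod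
  have k02 : (1+a+e+i)*(c+g) = (h-f)*(d-b) := by linear_combination hC5 + hR5 - coc - cog
  have k12 : (1+a+e+i)*(f+h) = (c-g)*(d-b) := by linear_combination hC6 + hR6 - cof - coh
  clear hR1 hR2 hR3 hR4 hR5 hR6 hC1 hC2 hC3 hC4 hC5 hC6 coa cob coc cod coe cof cog coh coi
  set r : ℝ := Real.sqrt (1+a+e+i) with hr_def
  have hr : 1+a+e+i = r*r := (Real.mul_self_sqrt hs.le).symm
  have hr0 : r ≠ 0 := by positivity
  rw [hr] at pa pe pi' k01 k02 k12
  refine ⟨r/2, (h-f)/(2*r), (c-g)/(2*r), (d-b)/(2*r), ?_, ?_, ?_, ?_, ?_, ?_, ?_, ?_, ?_, ?_⟩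
  · field_simp
    linear_combination pa + pe + pi' + 2*r^2*hr
  · field_simp
    linear_combination -pa + pe + pi' + 2*r^2*hr
  · field_simp
    linear_combination k01
  · field_simp
    linear_combination k02
  · field_simp
    linear_combination k01
  · field_simp
    linear_combination pa - pe + pi' + 2*r^2*hr
  · field_simp
    linear_combination k12
  · field_simp
    linear_combination k02
  · field_simp
    linear_combination k12
  · field_simp
    linear_combination pa + pe - pi' + 2*r^2*hr

lemma quatAll (a b c d e f g h i : ℝ)
    (hR1 : a^2+b^2+c^2 = 1) (hR2 : d^2+e^2+f^2 = 1) (hR3 : g^2+h^2+i^2 = 1)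
    (hR4 : a*d+b*e+c*f = 0) (hR5 : a*g+b*h+c*i = 0) (hR6 : d*g+e*h+f*i = 0)
    (hC1 : a^2+d^2+g^2 = 1) (hC2 : b^2+e^2+h^2 = 1) (hC3 : c^2+f^2+i^2 = 1)
    (hC4 : a*b+d*e+g*h = 0) (hC5 : a*c+d*f+g*i = 0) (hC6 : b*c+e*f+h*i = 0)
    (coa : e*i-f*h = a) (cob : f*g-d*i = b) (coc : d*h-e*g = c)
    (cod : c*h-b*i = d) (coe : a*i-c*g = e) (cof : b*g-a*h = f)
    (cog : b*f-c*e = g) (coh : c*d-a*f = h) (coi : a*e-b*d = i) :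
    ∃ w x y z : ℝ, w^2+x^2+y^2+z^2 = 1 ∧
      a = w^2+x^2-y^2-z^2 ∧ b = 2*(x*y-w*z) ∧ c = 2*(x*z+w*y) ∧
      d = 2*(x*y+w*z) ∧ e = w^2-x^2+y^2-z^2 ∧ f = 2*(y*z-w*x) ∧
      g = 2*(x*z-w*y) ∧ h = 2*(y*z+w*x) ∧ i = w^2-x^2-y^2+z^2 := by
  rcases lt_or_ge 0 (1+a+e+i) with hA | hA
  · exact quatA a b c d e f g h i hR1 hR2 hR3 hR4 hR5 hR6 hC1 hC2 hC3 hC4 hC5 hC6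
      coa cob coc cod coe cof cog coh coi hA
  rcases lt_or_ge 0 (1+a-e-i) with hB | hB
  · obtain ⟨w,x,y,z,hn,h1,h2,h3,h4,h5,h6,h7,h8,h9⟩ :=
      quatA a b c (-d) (-e) (-f) (-g) (-h) (-i)
      (by linear_combination hR1) (by linear_combination hR2) (by linear_combination hR3) (by linear_combination -hR4) (by linear_combination -hR5) (by linear_combination hR6) (by linear_combination hC1) (by linear_combination hC2) (by linear_combination hC3) (by linear_combination hC4) (by linear_combination hC5) (by linear_combination hC6) (by linear_combination coa) (by linear_combination cob) (by linear_combination coc) (by linear_combination -cod) (by linear_combination -coe) (by linear_combination -cof) (by linear_combination -cog) (by linear_combination -coh) (by linear_combination -coi)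
      (by linarith)
    exact ⟨-x, w, -z, y, by linear_combination hn, by linear_combination h1,
      by linear_combination h2, by linear_combination h3, by linear_combination -h4,
      by linear_combination -h5, by linear_combination -h6, by linear_combination -h7,
      by linear_combination -h8, by linear_combination -h9⟩
  rcases lt_or_ge 0 (1-a+e-i) with hC | hC
  · obtain ⟨w,x,y,z,hn,h1,h2,h3,h4,h5,h6,h7,h8,h9⟩ :=
      quatA (-a) (-b) (-c) d e f (-g) (-h) (-i)
      (by linear_combination hR1) (by linear_combination hR2) (by linear_combination hR3) (by linear_combination -hR4) (by linear_combination hR5) (by linear_combination -hR6) (by linear_combination hC1) (by linear_combination hC2) (by linear_combination hC3) (by linear_combination hC4) (by linear_combination hC5) (by linear_combination hC6) (by linear_combination -coa) (by linear_combination -cob) (by linear_combination -coc) (by linear_combination cod) (by linear_combination coe) (by linear_combination cof) (by linear_combination -cog) (by linear_combination -coh) (by linear_combination -coi)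
      (by linarith)
    exact ⟨-y, z, w, -x, by linear_combination hn, by linear_combination -h1,
      by linear_combination -h2, by linear_combination -h3, by linear_combination h4,
      by linear_combination h5, by linear_combination h6, by linear_combination -h7,
      by linear_combination -h8, by linear_combination -h9⟩
  · obtain ⟨w,x,y,z,hn,h1,h2,h3,h4,h5,h6,h7,h8,h9⟩ :=
      quatA (-a) (-b) (-c) (-d) (-e) (-f) g h i
      (by linear_combination hR1) (by linear_combination hR2) (by linear_combination hR3) (by linear_combination hR4) (by linear_combination -hR5) (by linear_combination -hR6) (by linear_combination hC1) (by linear_combination hC2) (by linear_combination hC3) (by linear_combination hC4) (by linear_combination hC5) (by linear_combination hC6) (by linear_combination -coa) (by linear_combination -cob) (by linear_combination -coc) (by linear_combination -cod) (by linear_combination -coe) (by linear_combination -cof) (by linear_combination cog) (by linear_combination coh) (by linear_combination coi)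
      (by linarith)
    exact ⟨-z, -y, x, w, by linear_combination hn, by linear_combination -h1,
      by linear_combination -h2, by linear_combination -h3, by linear_combination -h4,
      by linear_combination -h5, by linear_combination -h6, by linear_combination h7,
      by linear_combination h8, by linear_combination h9⟩

set_option maxHeartbeats 1000000 in
/-- Every rotation of `ℝ³` (an `ℝ`-linear map preserving the Euclidean norm and
of determinant `1`) on the purely imaginary quaternions arises as conjugation by
some unit quaternion. -/
theorem rotation_eq_quaternion_conjugation
    (R : EuclideanSpace ℝ (Fin 3) →ₗ[ℝ] EuclideanSpace ℝ (Fin 3))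
    (hnorm : ∀ v, ‖R v‖ = ‖v‖) (hdet : LinearMap.det R = 1) :
    ∃ q : ℍ[ℝ], ‖q‖ = 1 ∧
      ∀ v : EuclideanSpace ℝ (Fin 3), q * quatOf 0 v * q⁻¹ = quatOf 0 (R v) := by
  classical
  set E : Fin 3 → EuclideanSpace ℝ (Fin 3) := fun j => EuclideanSpace.single j 1 with hE
  set a : ℝ := R (E 0) 0
  set d : ℝ := R (E 0) 1
  set g : ℝ := R (E 0) 2
  set b : ℝ := R (E 1) 0
  set e : ℝ := R (E 1) 1
  set h : ℝ := R (E 1) 2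
  set c : ℝ := R (E 2) 0
  set f : ℝ := R (E 2) 1
  set i : ℝ := R (E 2) 2
  -- inner product preservation
  have hiso : ∀ u v, (inner ℝ (R u) (R v) : ℝ) = inner ℝ u v := fun u v =>
    LinearIsometry.inner_map_map ⟨R, hnorm⟩ u v
  have hinner : ∀ j k : Fin 3,
      R (E j) 0 * R (E k) 0 + R (E j) 1 * R (E k) 1 + R (E j) 2 * R (E k) 2
        = if j = k then 1 else 0 := by
    intro j k
    have := hiso (E k) (E j)
    simp only [PiLp.inner_apply, RCLike.inner_apply, conj_trivial, Fin.sum_univ_three] at this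
    rw [this, hE]
    simp [EuclideanSpace.single_apply, EuclideanSpace.inner_single_left,
      EuclideanSpace.inner_single_right]
    fin_cases j <;> fin_cases k <;> simp
  have hC1 : a^2+d^2+g^2 = 1 := by have := hinner 0 0; simp at this; linear_combination this
  have hC2 : b^2+e^2+h^2 = 1 := by have := hinner 1 1; simp at this; linear_combination this
  have hC3 : c^2+f^2+i^2 = 1 := by have := hinner 2 2; simp at this; linear_combination this
  have hC4 : a*b+d*e+g*h = 0 := by have := hinner 0 1; simp at this; linear_combination this
  have hC5 : a*c+d*f+g*i = 0 := by have := hinner 0 2; simp at this; linear_combination this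
  have hC6 : b*c+e*f+h*i = 0 := by have := hinner 1 2; simp at this; linear_combination this
  -- determinant
  set B := (EuclideanSpace.basisFun (Fin 3) ℝ).toBasis with hB
  have hdet3 : a*(e*i-f*h) - b*(d*i-f*g) + c*(d*h-e*g) = 1 := by
    have h1 : (LinearMap.toMatrix B B R).det = 1 := by
      rw [LinearMap.det_toMatrix]; exact hdet
    rw [Matrix.det_fin_three] at h1
    have h2 : ∀ j k : Fin 3, LinearMap.toMatrix B B R j k = R (E k) j := by
      intro j k
      rw [LinearMap.toMatrix_apply]
      simp [hB, hE]
    simp only [h2] at h1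
    linear_combination h1
  -- matrix relations
  set A : Matrix (Fin 3) (Fin 3) ℝ := !![a,b,c;d,e,f;g,h,i] with hA
  have hAdet : A.det = 1 := by rw [hA, Matrix.det_fin_three]; simp; linear_combination hdet3
  have hTA : Aᵀ * A = 1 := by
    ext j k
    rw [Matrix.mul_apply, Fin.sum_univ_three]
    fin_cases j <;> fin_cases k <;>
      simp [hA, Matrix.one_apply] <;>
      [linear_combination hC1; linear_combination hC4; linear_combination hC5;
       linear_combination hC4; linear_combination hC2; linear_combination hC6;
       linear_combination hC5; linear_combination hC6; linear_combination hC3]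
  have hAT : A * Aᵀ = 1 := mul_eq_one_comm.mp hTA
  have hadj : A.adjugate = Aᵀ := by
    calc A.adjugate = A.adjugate * (A * Aᵀ) := by rw [hAT, mul_one]
    _ = (A.adjugate * A) * Aᵀ := by rw [mul_assoc]
    _ = Aᵀ := by rw [Matrix.adjugate_mul, hAdet, one_smul, one_mul]
  have hR' : ∀ j k : Fin 3, A j 0 * A k 0 + A j 1 * A k 1 + A j 2 * A k 2
      = if j = k then 1 else 0 := by
    intro j k
    have h2 : (A * Aᵀ) j k = (1 : Matrix (Fin 3) (Fin 3) ℝ) j k := by rw [hAT]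
    rw [Matrix.mul_apply, Fin.sum_univ_three] at h2
    simpa [Matrix.one_apply, Matrix.transpose_apply] using h2
  have hR1 : a^2+b^2+c^2 = 1 := by have := hR' 0 0; simp [hA] at this; linear_combination this
  have hR2 : d^2+e^2+f^2 = 1 := by have := hR' 1 1; simp [hA] at this; linear_combination this
  have hR3 : g^2+h^2+i^2 = 1 := by have := hR' 2 2; simp [hA] at this; linear_combination this
  have hR4 : a*d+b*e+c*f = 0 := by have := hR' 0 1; simp [hA] at this; linear_combination this
  have hR5 : a*g+b*h+c*i = 0 := by have := hR' 0 2; simp [hA] at this; linear_combination this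
  have hR6 : d*g+e*h+f*i = 0 := by have := hR' 1 2; simp [hA] at this; linear_combination this
  rw [hA, Matrix.adjugate_fin_three_of] at hadj
  have hco : ∀ p q : Fin 3, (!![e*i - f*h, -(b*i) + c*h, b*f - c*e;
      -(d*i) + f*g, a*i - c*g, -(a*f) + c*d;
      d*h - e*g, -(a*h) + b*g, a*e - b*d] : Matrix (Fin 3) (Fin 3) ℝ) p q
      = (!![a,b,c;d,e,f;g,h,i])ᵀ p q := fun p q => by rw [hadj]
  have coa : e*i-f*h = a := by have := hco 0 0; simpa using this
  have cob : f*g-d*i = b := by have := hco 1 0; simp at this; linear_combination this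
  have coc : d*h-e*g = c := by have := hco 2 0; simp at this; linear_combination this
  have cod : c*h-b*i = d := by have := hco 0 1; simp at this; linear_combination this
  have coe' : a*i-c*g = e := by have := hco 1 1; simpa using this
  have cof : b*g-a*h = f := by have := hco 2 1; simp at this; linear_combination this
  have cog : b*f-c*e = g := by have := hco 0 2; simpa using this
  have coh : c*d-a*f = h := by have := hco 1 2; simp at this; linear_combination this
  have coi : a*e-b*d = i := by have := hco 2 2; simpa using this
  obtain ⟨w,x,y,z,hn,h1,h2,h3,h4,h5,h6,h7,h8,h9⟩ :=
    quatAll a b c d e f g h i hR1 hR2 hR3 hR4 hR5 hR6 hC1 hC2 hC3 hC4 hC5 hC6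
      coa cob coc cod coe' cof cog coh coi
  set q : ℍ[ℝ] := ⟨w,x,y,z⟩ with hqdef
  have hqre : q.re = w := by rw [hqdef]
  have hqi : q.imI = x := by rw [hqdef]
  have hqj : q.imJ = y := by rw [hqdef]
  have hqk : q.imK = z := by rw [hqdef]
  have hq1 : ‖q‖ = 1 := by
    have hq : Quaternion.normSq q = 1 := by
      rw [Quaternion.normSq_def', hqre, hqi, hqj, hqk]; linear_combination hn
    have h3 : ‖q‖ * ‖q‖ = 1 := by rw [← Quaternion.normSq_eq_norm_mul_self q, hq]
    rcases mul_self_eq_one_iff.mp h3 with h4 | h4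
    · exact h4
    · linarith [norm_nonneg q]
  have hq0 : q ≠ 0 := by
    intro hcon; rw [hcon, norm_zero] at hq1; exact one_ne_zero hq1.symm
  refine ⟨q, hq1, ?_⟩
  intro v
  have hveq : v = v 0 • E 0 + v 1 • E 1 + v 2 • E 2 := by
    ext k
    fin_cases k <;> simp [hE, EuclideanSpace.single_apply]
  have hv0 : R v 0 = v 0 * a + v 1 * b + v 2 * c := by
    conv_lhs => rw [hveq]
    simp [mul_comm]
    rfl
  have hv1 : R v 1 = v 0 * d + v 1 * e + v 2 * f := by
    conv_lhs => rw [hveq]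
    simp [mul_comm]
    rfl
  have hv2 : R v 2 = v 0 * g + v 1 * h + v 2 * i := by
    conv_lhs => rw [hveq]
    simp [mul_comm]
    rfl
  have hre0 : (quatOf 0 v).re = 0 := rfl
  have hreI : (quatOf 0 v).imI = v 0 := rfl
  have hreJ : (quatOf 0 v).imJ = v 1 := rfl
  have hreK : (quatOf 0 v).imK = v 2 := rfl
  have hse0 : (quatOf 0 (R v)).re = 0 := rfl
  have hseI : (quatOf 0 (R v)).imI = R v 0 := rfl
  have hseJ : (quatOf 0 (R v)).imJ = R v 1 := rfl
  have hseK : (quatOf 0 (R v)).imK = R v 2 := rfl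
  have hmain : q * quatOf 0 v = quatOf 0 (R v) * q := by
    apply Quaternion.ext <;>
      simp only [Quaternion.re_mul, Quaternion.imI_mul, Quaternion.imJ_mul,
        Quaternion.imK_mul, hqre, hqi, hqj, hqk, hre0, hreI, hreJ, hreK,
        hse0, hseI, hseJ, hseK] <;>
      rw [hv0, hv1, hv2]
    · linear_combination v 0 * (x*h1 + y*h4 + z*h7 + x*hn) +
        v 1 * (x*h2 + y*h5 + z*h8 + y*hn) + v 2 * (x*h3 + y*h6 + z*h9 + z*hn)
    · linear_combination v 0 * (-w*h1 - z*h4 + y*h7 - w*hn) +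
        v 1 * (-w*h2 - z*h5 + y*h8 + z*hn) + v 2 * (-w*h3 - z*h6 + y*h9 - y*hn)
    · linear_combination v 0 * (z*h1 - w*h4 - x*h7 - z*hn) +
        v 1 * (z*h2 - w*h5 - x*h8 - w*hn) + v 2 * (z*h3 - w*h6 - x*h9 + x*hn)
    · linear_combination v 0 * (-y*h1 + x*h4 - w*h7 + y*hn) +
        v 1 * (-y*h2 + x*h5 - w*h8 - x*hn) + v 2 * (-y*h3 + x*h6 - w*h9 - w*hn)
  calc q * quatOf 0 v * q⁻¹ = (quatOf 0 (R v) * q) * q⁻¹ := by rw [hmain]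
    _ = quatOf 0 (R v) * (q * q⁻¹) := by rw [mul_assoc]
    _ = quatOf 0 (R v) := by rw [mul_inv_cancel₀ hq0, mul_one]
end

section
/- There is no three-dimensional real associative division algebra: if D is a (possibly noncommutative) division ring that is also an algebra over ℝ and is finite-dimensional as a real vector space, then its dimension over ℝ is not equal to 3. -/
open Polynomial

/-- There is no three-dimensional real associative division algebra. -/
theorem no_three_dimensional_real_division_algebra
    (D : Type*) [DivisionRing D] [Algebra ℝ D] [FiniteDimensional ℝ D] :
    Module.finrank ℝ D ≠ 3 := by
  intro h3
  have h1 : Module.finrank ℝ D ≠ 1 := by omega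
  obtain ⟨x, hx⟩ : ∃ x : D, x ∉ (⊥ : Subalgebra ℝ D) := by
    by_contra h
    push_neg at h
    exact h1 (Subalgebra.bot_eq_top_iff_finrank_eq_one.1 (eq_top_iff.2 fun y _ => h y))
  have hint : IsIntegral ℝ x := IsIntegral.of_finite ℝ x
  have hirr : Irreducible (minpoly ℝ x) := minpoly.irreducible hint
  have hdeg : (minpoly ℝ x).natDegree ≤ 2 := hirr.natDegree_le_two
  set K : Subalgebra ℝ D := Algebra.adjoin ℝ {x} with hK
  -- K is contained in the span of {1, x}
  have hspan : Subalgebra.toSubmodule K ≤ Submodule.span ℝ {1, x} := by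
    intro y hy
    rw [hK, Subalgebra.mem_toSubmodule, Algebra.adjoin_singleton_eq_range_aeval] at hy
    obtain ⟨p, rfl⟩ := hy
    obtain ⟨q, r, hr, hpq⟩ : ∃ q r : ℝ[X], r.natDegree ≤ 1 ∧ p = minpoly ℝ x * q + r := by
      refine ⟨p /ₘ minpoly ℝ x, p %ₘ minpoly ℝ x, ?_, ?_⟩
      · have := Polynomial.natDegree_modByMonic_lt p (minpoly.monic hint)
          (fun hu => hirr.not_isUnit (hu ▸ isUnit_one))
        omega
      · rw [add_comm, Polynomial.modByMonic_add_div p (minpoly ℝ x)]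
    rw [hpq]
    simp only [map_add, map_mul, minpoly.aeval, zero_mul, zero_add]
    obtain ⟨a, b, rfl⟩ : ∃ a b : ℝ, r = C a * X + C b :=
      ⟨r.coeff 1, r.coeff 0, (Polynomial.eq_X_add_C_of_natDegree_le_one hr).trans (by ring)⟩
    simp only [map_add, map_mul, aeval_X, aeval_C]
    have hx1 : x ∈ Submodule.span ℝ ({1, x} : Set D) := Submodule.subset_span (by simp)
    have h11 : (1 : D) ∈ Submodule.span ℝ ({1, x} : Set D) := Submodule.subset_span (by simp)
    have := Submodule.add_mem _ (Submodule.smul_mem _ a hx1) (Submodule.smul_mem _ b h11)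
    simpa [Algebra.smul_def] using this
  have hKle : Module.finrank ℝ K ≤ 2 := by
    calc Module.finrank ℝ K = Module.finrank ℝ (Subalgebra.toSubmodule K) := rfl
    _ ≤ Module.finrank ℝ (Submodule.span ℝ ({1, x} : Set D)) := Submodule.finrank_mono hspan
    _ ≤ 2 := by
        classical
        have := finrank_span_le_card (R := ℝ) ({1, x} : Set D)
        refine this.trans ?_
        rw [Set.toFinset_insert, Set.toFinset_singleton]
        exact (Finset.card_insert_le _ _).trans (by simp)
  have hKne : Module.finrank ℝ K ≠ 1 := fun h2 =>
    hx ((Subalgebra.finrank_eq_one_iff.1 h2) ▸ Algebra.self_mem_adjoin_singleton ℝ x)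
  have hKpos : 0 < Module.finrank ℝ K := Module.finrank_pos
  have hK2 : Module.finrank ℝ K = 2 := by omega
  -- K is a field
  letI : CommRing K := Algebra.adjoinCommRingOfComm ℝ (by
    intro a ha b hb
    rw [Set.mem_singleton_iff] at ha hb
    rw [ha, hb])
  letI : IsDomain K := Function.Injective.isDomain K.val.toRingHom Subtype.coe_injective
  letI : Field K := fieldOfFiniteDimensional ℝ K
  haveI : FiniteDimensional K D := FiniteDimensional.right ℝ K D
  have := Module.finrank_mul_finrank ℝ K D
  rw [hK2, h3] at this
  omega
end
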